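/- Symbolic Completeness Theorem: Let PT = (P, I, A) be a monotonic planning task with I = ∅, T ⊆ Events* a prefix-closed set of traces, and Σ∩ ⊆ P ∩ Events. Assume: (SC1) each action has a singleton postcondition; (SC4') for every action (pre, {c}) with c ∈ Σ∩, pre ⊆ Σ∩; (C1, liveness) for every t ∈ T and every action (pre, {c}) ∈ A with c ∈ Σ∩ and pre contained in the set of elements of t, there exists an extension t' = t ++ t_r ∈ T with set(t_r) ∩ Σ∩ = {c}. Then PT is symbolically complete with respect to T: for every planning trace pt of PT there exists a trace t ∈ T with pt|Σ∩ = t|Σ∩ — provided additionally that all propositions appearing in planning traces are in Σ∩ (e.g., P = Σ∩) and the empty trace is in T. -/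
import Mathlib


noncomputable def restr {α : Type*} (S : Set α) (l : List α) : List α :=
  l.filter (fun x => @decide (x ∈ S) (Classical.propDecidable _))

inductive PTrace {α : Type*} (A : Set (Set α × Set α)) :
    Set α → List α → Set α → Prop
  | nil (σ : Set α) : PTrace A σ [] σ
  | cons {σ σ' : Set α} {pre : Set α} {c : α} {tr : List α}
      (ha : (pre, ({c} : Set α)) ∈ A) (hpre : pre ⊆ σ)
      (h : PTrace A (σ ∪ {c}) tr σ') : PTrace A σ (c :: tr) σ'


lemma restr_cons_mem {α : Type*} {S : Set α} {c : α} (hc : c ∈ S) (l : List α) :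
    restr S (c :: l) = c :: restr S l := by
  have h := @decide_eq_true (c ∈ S) (Classical.propDecidable _) hc
  simp [restr, List.filter_cons, h]

lemma restr_cons_not_mem {α : Type*} {S : Set α} {c : α} (hc : c ∉ S) (l : List α) :
    restr S (c :: l) = restr S l := by
  have h := @decide_eq_false (c ∈ S) (Classical.propDecidable _) hc
  simp [restr, List.filter_cons, h]

lemma restr_append {α : Type*} (S : Set α) (l₁ l₂ : List α) :
    restr S (l₁ ++ l₂) = restr S l₁ ++ restr S l₂ := by
  simp [restr]

lemma mem_of_restr {α : Type*} {S : Set α} {c : α} {l : List α}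
    (h : c ∈ restr S l) : c ∈ l := List.mem_of_mem_filter h

lemma first_occ {α : Type*} (S : Set α) (c : α) :
    ∀ tr : List α, {x | x ∈ tr} ∩ S = {c} →
      ∃ tr' : List α, tr' <+: tr ∧ restr S tr' = [c] := by
  intro tr
  induction tr with
  | nil => intro h; exfalso
           have : c ∈ ({x | x ∈ ([] : List α)} ∩ S) := h ▸ rfl
           simpa using this.1
  | cons a rest ih =>
    intro h
    by_cases ha : a ∈ S
    · have : a ∈ ({x | x ∈ a :: rest} ∩ S) := ⟨by simp, ha⟩
      rw [h] at this
      rcases this with rfl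
      exact ⟨[a], ⟨rest, rfl⟩, by rw [restr_cons_mem ha]; simp [restr]⟩
    · have hc : c ∈ ({x | x ∈ a :: rest} ∩ S) := h ▸ rfl
      have hcS : c ∈ S := hc.2
      have hca : c ≠ a := fun e => ha (e ▸ hcS)
      have hcrest : c ∈ rest := by
        have h1 := hc.1
        simp at h1; tauto
      have hrest : {x | x ∈ rest} ∩ S = {c} := by
        apply Set.eq_of_subset_of_subset
        · intro x hx
          have : x ∈ ({x | x ∈ a :: rest} ∩ S) :=
            ⟨List.mem_cons_of_mem a hx.1, hx.2⟩
          rw [h] at this; exact this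
        · intro x hx; rcases hx with rfl; exact ⟨hcrest, hcS⟩
      obtain ⟨tr', ⟨s, hs⟩, hres⟩ := ih hrest
      exact ⟨a :: tr', ⟨s, by simp [hs]⟩, by rw [restr_cons_not_mem ha, hres]⟩

/-- Symbolic Completeness: under SC1, SC4', the liveness
condition C1, prefix-closedness of `T`, the empty trace being in `T`, and all
propositions appearing in planning traces (i.e. all postconditions) being in
`Σ∩`, every planning trace `pt` of `(P, ∅, A)` has a protocol trace `t ∈ T`
with `pt|Σ∩ = t|Σ∩`. -/
theorem symbolic_completeness {α : Type*} (A : Set (Set α × Set α))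
    (T : Set (List α)) (Scap : Set α)
    (hSC1 : ∀ a ∈ A, ∃ c : α, a.2 = {c})
    (hSC4 : ∀ (pre : Set α) (c : α), (pre, ({c} : Set α)) ∈ A → c ∈ Scap →
      pre ⊆ Scap)
    (hprefix : ∀ t ∈ T, ∀ t' : List α, t' <+: t → t' ∈ T)
    (hempty : ([] : List α) ∈ T)
    (hpost : ∀ (pre : Set α) (c : α), (pre, ({c} : Set α)) ∈ A → c ∈ Scap)
    (hC1 : ∀ t ∈ T, ∀ (pre : Set α) (c : α), (pre, ({c} : Set α)) ∈ A →
      c ∈ Scap → (∀ p ∈ pre, p ∈ t) →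
      ∃ tr : List α, (t ++ tr) ∈ T ∧ {x | x ∈ tr} ∩ Scap = {c}) :
    ∀ (pt : List α) (σ : Set α), PTrace A ∅ pt σ →
      ∃ t ∈ T, restr Scap pt = restr Scap t := by
  have main : ∀ (pt : List α) (σ σ' : Set α), PTrace A σ pt σ' →
      ∀ t ∈ T, σ ∩ Scap ⊆ {x | x ∈ t} →
      ∃ t' ∈ T, restr Scap t' = restr Scap t ++ restr Scap pt := by
    intro pt σ σ' hpt
    induction hpt with
    | nil σ => intro t ht _; exact ⟨t, ht, by simp [restr]⟩
    | @cons σ σ' pre c tr ha hpre h ih =>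
      intro t ht hsub
      have hcS : c ∈ Scap := hpost _ _ ha
      have hpreS : pre ⊆ Scap := hSC4 _ _ ha hcS
      have hpret : ∀ p ∈ pre, p ∈ t := fun p hp => hsub ⟨hpre hp, hpreS hp⟩
      obtain ⟨trr, htrr, hset⟩ := hC1 t ht pre c ha hcS hpret
      obtain ⟨tr', ⟨s, hs⟩, hres⟩ := first_occ Scap c trr hset
      have ht2 : t ++ tr' ∈ T :=
        hprefix _ htrr _ ⟨s, by rw [List.append_assoc, hs]⟩
      have hctr' : c ∈ tr' := mem_of_restr (l := tr') (by rw [hres]; simp)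
      have hsub2 : (σ ∪ {c}) ∩ Scap ⊆ {x | x ∈ t ++ tr'} := by
        intro x hx
        rcases hx.1 with hxσ | hxc
        · exact List.mem_append_left _ (hsub ⟨hxσ, hx.2⟩)
        · rcases hxc with rfl
          exact List.mem_append_right _ hctr'
      obtain ⟨t', ht', heq⟩ := ih (t ++ tr') ht2 hsub2
      refine ⟨t', ht', ?_⟩
      rw [heq, restr_append, hres, restr_cons_mem hcS]
      simp
  intro pt σ hpt
  obtain ⟨t', ht', heq⟩ := main pt ∅ σ hpt [] hempty (by simp)
  exact ⟨t', ht', by simpa [restr] using heq.symm⟩
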